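/- Fix ℓ > 0, an invertible map S : Y → Y and σ : Y → ℝ. Let 1 ≤ r < d, let Q ∈ 𝒟_d, let y ∈ Y, and suppose 𝒥 is a family of cells of 𝒟_r contained in Q such that |𝒥| ≥ (1 − κ_{r,d})·N_d/N_r and ⋃𝒥 ⊆ ⋂_{s=r+1}^{d} H^{mndr}_{s,Q}(y). Then there is a family (Q_ω)_{ω∈{0,1}^{d−r}} of members of 𝒥 which is adapted to (𝒟_d, 𝒟_{d−1}, …, 𝒟_r) and such that the sets B_ℓ(σ^y_{Q_ω}), ω ∈ {0,1}^{d−r}, are pairwise disjoint. -/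

import Mathlib

/-- `L_d := ⌈(d+1)^18⌉ = (d+1)^18`. -/
def Lseq (d : ℕ) : ℕ := (d + 1) ^ 18

/-- `N_0 := 1` and `N_{d+1} := L_{d+1}·N_d`. -/
def Nseq : ℕ → ℕ
  | 0 => 1
  | d + 1 => Lseq (d + 1) * Nseq d

/-- `α_d := (d+1)^{−2}`. -/
noncomputable def alphaSeq (d : ℕ) : ℝ := 1 / ((d : ℝ) + 1) ^ 2

/-- `κ_{r,d} := ∏_{i=r+1}^{d} (1 − α_i)`. -/
noncomputable def kappaSeq (r d : ℕ) : ℝ := ∏ i ∈ Finset.Icc (r + 1) d, (1 - alphaSeq i)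

/-- Two-sided cocycle partial sums `σ^y_n`, `n ∈ ℤ`. -/
noncomputable def zcoc {Y : Type*} (S : Equiv.Perm Y) (σ : Y → ℝ) (y : Y) (n : ℤ) : ℝ :=
  if 0 ≤ n then ∑ m ∈ Finset.Ico (0 : ℤ) n, σ ((S ^ m) y)
  else -∑ m ∈ Finset.Ico n (0 : ℤ), σ ((S ^ m) y)

/-- `σ^y_J := {σ^y_n : n ∈ J}`. -/
noncomputable def zimg {Y : Type*} (S : Equiv.Perm Y) (σ : Y → ℝ) (y : Y)
    (J : Set ℤ) : Set ℝ :=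
  (fun n => zcoc S σ y n) '' J

/-- `dist(E,F) := inf{|u−v| : u ∈ E, v ∈ F}`. -/
noncomputable def setSep (E F : Set ℝ) : ℝ :=
  sInf (Set.image2 (fun u v => |u - v|) E F)

/-- `B_ℓ(E) := {u ∈ ℝ : dist(u,E) < ℓ}`. -/
def realNbhd (ℓ : ℝ) (E : Set ℝ) : Set ℝ := {u | ∃ v ∈ E, |u - v| < ℓ}

/-- The trajectory `σ^y` is `(α,ℓ)`-meandering over the interval `[a; a+Lnum·M)`
partitioned into `Lnum` consecutive length-`M` blocks. -/
noncomputable def MeandZ {Y : Type*} (S : Equiv.Perm Y) (σ : Y → ℝ) (y : Y)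
    (α ℓ : ℝ) (a : ℤ) (M Lnum : ℕ) : Prop :=
  ∀ 𝒥 : Finset ℕ, 𝒥 ⊆ Finset.range Lnum → α * Lnum ≤ (𝒥.card : ℝ) →
    ∃ i ∈ 𝒥, ∃ j ∈ 𝒥, i ≠ j ∧
      2 * ℓ < setSep
        (zimg S σ y (Set.Ico (a + (i : ℤ) * (M : ℤ)) (a + ((i : ℤ) + 1) * (M : ℤ))))
        (zimg S σ y (Set.Ico (a + (j : ℤ) * (M : ℤ)) (a + ((j : ℤ) + 1) * (M : ℤ))))

/-- The cell `[j·N_r; (j+1)·N_r)` of the partition `𝒟_r` of `ℤ`. -/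
def cellD (r : ℕ) (j : ℤ) : Set ℤ :=
  Set.Ico (j * (Nseq r : ℤ)) ((j + 1) * (Nseq r : ℤ))

/-- The left endpoint of the cell of `𝒟_s` containing `t`. -/
def cellStart (s : ℕ) (t : ℤ) : ℤ := (Int.fdiv t (Nseq s)) * (Nseq s : ℤ)

section Helpers

lemma Nseq_pos (d : ℕ) : 0 < Nseq d := by
  induction d with
  | zero => simp [Nseq]
  | succ d ih => exact Nat.mul_pos (Nat.pow_pos (Nat.succ_pos _)) ih

lemma Nseq_dvd {r d : ℕ} (h : r ≤ d) : Nseq r ∣ Nseq d := by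
  induction d with
  | zero => simp_all
  | succ d ih =>
    rcases Nat.eq_or_lt_of_le h with h' | h'
    · rw [h']
    · exact Dvd.dvd.mul_left (ih (Nat.lt_succ_iff.mp h')) _

lemma fdiv_eq_iff {N : ℤ} (hN : 0 < N) (t p : ℤ) :
    Int.fdiv t N = p ↔ p * N ≤ t ∧ t < (p + 1) * N := by
  rw [Int.fdiv_eq_ediv_of_nonneg t hN.le]
  constructor
  · rintro rfl
    exact ⟨(Int.le_ediv_iff_mul_le hN).mp le_rfl, (Int.ediv_lt_iff_lt_mul hN).mp (lt_add_one _)⟩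
  · rintro ⟨h1, h2⟩
    have := (Int.le_ediv_iff_mul_le hN).mpr h1
    have := (Int.ediv_lt_iff_lt_mul hN).mpr h2
    omega

lemma fdiv_eq_of_dvd {a b : ℤ} (ha : 0 < a) (hab : a ∣ b) (hb : 0 < b)
    {x y : ℤ} (h : Int.fdiv x a = Int.fdiv y a) : Int.fdiv x b = Int.fdiv y b := by
  set p := Int.fdiv y a with hp
  have hx : p * a ≤ x ∧ x < (p + 1) * a := (fdiv_eq_iff ha x p).mp (by rw [h])
  have hy : p * a ≤ y ∧ y < (p + 1) * a := (fdiv_eq_iff ha y p).mp rfl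
  set P := Int.fdiv (p * a) b with hP
  have hPa : P * b ≤ p * a ∧ p * a < (P + 1) * b := (fdiv_eq_iff hb _ P).mp rfl
  have hdiva : a ∣ p * a - P * b :=
    Int.dvd_sub ⟨p, mul_comm p a⟩ (Dvd.dvd.mul_left hab P)
  have hle : (p + 1) * a ≤ (P + 1) * b := by
    rcases hdiva with ⟨c, hc⟩
    rcases hab with ⟨e, he⟩
    have h1 : a * c < a * e := by nlinarith [hPa.2]
    have h2 : c ≤ e - 1 := by
      have := lt_of_mul_lt_mul_left h1 ha.le
      omega
    have h3 : a * c ≤ a * (e - 1) := mul_le_mul_of_nonneg_left h2 ha.le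
    nlinarith [hPa.1]
  have e1 : Int.fdiv x b = P := (fdiv_eq_iff hb x P).mpr ⟨le_trans hPa.1 hx.1, lt_of_lt_of_le hx.2 hle⟩
  have e2 : Int.fdiv y b = P := (fdiv_eq_iff hb y P).mpr ⟨le_trans hPa.1 hy.1, lt_of_lt_of_le hy.2 hle⟩
  omega

lemma alpha_mem {i : ℕ} (hi : 1 ≤ i) : 0 < alphaSeq i ∧ alphaSeq i < 1 := by
  unfold alphaSeq
  constructor
  · positivity
  · rw [div_lt_one (by positivity)]
    have : (1:ℝ) ≤ (i:ℝ) := by exact_mod_cast hi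
    nlinarith

lemma kappa_pos {r d : ℕ} (hr : 1 ≤ r) : 0 < kappaSeq r d := by
  apply Finset.prod_pos
  intro i hi
  have : 1 ≤ i := le_trans (by omega) (Finset.mem_Icc.mp hi).1
  linarith [(alpha_mem this).2]

lemma kappa_le_one {r d : ℕ} (hr : 1 ≤ r) : kappaSeq r d ≤ 1 := by
  apply Finset.prod_le_one
  · intro i hi
    have : 1 ≤ i := le_trans (by omega) (Finset.mem_Icc.mp hi).1
    linarith [(alpha_mem this).2]
  · intro i hi
    have : 1 ≤ i := le_trans (by omega) (Finset.mem_Icc.mp hi).1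
    linarith [(alpha_mem this).1]

lemma kappa_succ {r d : ℕ} (h : r ≤ d) :
    kappaSeq r (d + 1) = kappaSeq r d * (1 - alphaSeq (d + 1)) := by
  unfold kappaSeq
  rw [Finset.prod_Icc_succ_top (by omega)]

lemma kappa_lt_one {r d : ℕ} (hr : 1 ≤ r) (hrd : r < d) : kappaSeq r d < 1 := by
  obtain ⟨e, rfl⟩ : ∃ e, d = e + 1 := ⟨d - 1, by omega⟩
  rw [kappa_succ (by omega)]
  have h1 := kappa_pos (d := e) hr
  have h2 := kappa_le_one (d := e) hr
  have h3 := (alpha_mem (i := e + 1) (by omega)).1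
  have h4 := (alpha_mem (i := e + 1) (by omega)).2
  nlinarith

lemma setSep_le {E F : Set ℝ} {v w : ℝ} (hv : v ∈ E) (hw : w ∈ F) :
    setSep E F ≤ |v - w| := by
  apply csInf_le
  · exact ⟨0, fun x hx => by
      rcases hx with ⟨u, hu, v', hv', rfl⟩
      positivity⟩
  · exact ⟨v, hv, w, hw, rfl⟩

lemma disjoint_nbhd {ℓ : ℝ} {E F E' F' : Set ℝ} (hE : E ⊆ E') (hF : F ⊆ F')
    (hsep : 2 * ℓ < setSep E' F') : Disjoint (realNbhd ℓ E) (realNbhd ℓ F) := by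
  rw [Set.disjoint_left]
  rintro u ⟨v, hv, huv⟩ ⟨w, hw, huw⟩
  have h1 : setSep E' F' ≤ |v - w| := setSep_le (hE hv) (hF hw)
  have h2 : |v - w| ≤ |u - v| + |u - w| := by
    calc |v - w| = |-(u - v) + (u - w)| := by ring_nf
    _ ≤ |-(u-v)| + |u - w| := abs_add_le _ _
    _ = |u - v| + |u - w| := by rw [abs_neg]
  linarith

end Helpers

lemma cantor_aux {Y : Type*} (S : Equiv.Perm Y) (σ : Y → ℝ) (ℓ : ℝ) (hℓ : 0 < ℓ)
    (r : ℕ) (hr : 1 ≤ r) (y : Y) :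
    ∀ k : ℕ, ∀ q' : ℤ, ∀ J' : Finset ℤ,
    (∀ j ∈ J', cellD r j ⊆ cellD (r + k) q') →
    J'.Nonempty →
    ((1 - kappaSeq r (r + k)) * ((Nseq (r + k) : ℝ) / (Nseq r : ℝ)) ≤ (J'.card : ℝ)) →
    (∀ j ∈ J', ∀ t ∈ cellD r j, ∀ s : ℕ, r + 1 ≤ s → s ≤ r + k →
      MeandZ S σ y (alphaSeq s) ℓ (cellStart s t) (Nseq (s - 1)) (Lseq s)) →
    ∃ f : (Fin k → Bool) → ℤ,
      (∀ ω, f ω ∈ J') ∧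
      (∀ s : ℕ, s ≤ k → ∀ ω ω' : Fin k → Bool,
        (∀ i : Fin k, (i : ℕ) < s → ω i = ω' i) →
        Int.fdiv (f ω * (Nseq r : ℤ)) (Nseq (r + k - s))
          = Int.fdiv (f ω' * (Nseq r : ℤ)) (Nseq (r + k - s))) ∧
      (∀ ω ω' : Fin k → Bool, ∀ i : Fin k, ω i ≠ ω' i →
        Int.fdiv (f ω * (Nseq r : ℤ)) (Nseq (r + k - ((i : ℕ) + 1)))
          ≠ Int.fdiv (f ω' * (Nseq r : ℤ)) (Nseq (r + k - ((i : ℕ) + 1)))) ∧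
      (∀ ω ω' : Fin k → Bool, ω ≠ ω' →
        Disjoint (realNbhd ℓ (zimg S σ y (cellD r (f ω))))
          (realNbhd ℓ (zimg S σ y (cellD r (f ω'))))) := by
  intro k
  induction k with
  | zero =>
    intro q' J' hJQ hne hcard hm
    obtain ⟨j₀, hj₀⟩ := hne
    refine ⟨fun _ => j₀, fun _ => hj₀, fun s hs ω ω' _ => rfl, fun ω ω' i => i.elim0, ?_⟩
    intro ω ω' hne'
    exact absurd (funext fun i => i.elim0) hne'
  | succ k ih =>
    intro q' J' hJQ hne hcard hm
    -- notation
    set L : ℕ := Lseq (r + k + 1) with hLdef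
    set N1 : ℕ := Nseq (r + k) with hN1def
    set Nr : ℕ := Nseq r with hNrdef
    have hN : Nseq (r + (k + 1)) = L * N1 := rfl
    have hL0 : 0 < L := Nat.pow_pos (Nat.succ_pos _)
    clear_value L N1 Nr
    obtain ⟨m, hmN⟩ : Nr ∣ N1 := by
      rw [hNrdef, hN1def]; exact Nseq_dvd (Nat.le_add_right r k)
    have hNr0 : 0 < Nr := by rw [hNrdef]; exact Nseq_pos r
    have hN10 : 0 < N1 := by rw [hN1def]; exact Nseq_pos (r + k)
    have hm0 : 0 < m := by
      rcases Nat.eq_zero_or_pos m with h | h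
      · rw [h, Nat.mul_zero] at hmN; omega
      · exact h
    have hN1Z : (0:ℤ) < (N1:ℤ) := by exact_mod_cast hN10
    have hNZ : (0:ℤ) < (Nseq (r + (k+1)) : ℤ) := by exact_mod_cast Nseq_pos (r + (k+1))
    -- every j ∈ J' has its left endpoint in the big cell
    have hNrZ0 : (0:ℤ) < (Nr:ℤ) := by exact_mod_cast hNr0
    have hleft : ∀ j : ℤ, (j * (Nr:ℤ)) ∈ cellD r j := by
      intro j
      simp only [cellD, Set.mem_Ico, ← hNrdef]
      exact ⟨le_refl _, by linarith⟩
    have hbig : ∀ j ∈ J', q' * ((L:ℤ) * N1) ≤ j * (Nr:ℤ) ∧ j * (Nr:ℤ) < (q' + 1) * ((L:ℤ) * N1) := by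
      intro j hj
      have h1 := hJQ j hj (hleft j)
      unfold cellD at h1
      rw [Set.mem_Ico] at h1
      have hcast : (Nseq (r + (k+1)) : ℤ) = (L:ℤ) * (N1:ℤ) := by rw [hN]; push_cast; ring
      rw [hcast] at h1
      exact h1
    -- fdiv at the N1 scale: the key
    set key : ℤ → ℤ := fun j => Int.fdiv (j * (Nr:ℤ)) (N1:ℤ) with hkeydef
    have hkeychar : ∀ j : ℤ, key j * N1 ≤ j * (Nr:ℤ) ∧ j * (Nr:ℤ) < (key j + 1) * N1 :=
      fun j => (fdiv_eq_iff hN1Z _ (key j)).mp rfl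
    have hkeyrange : ∀ j ∈ J', q' * L ≤ key j ∧ key j < q' * L + L := by
      intro j hj
      obtain ⟨h1, h2⟩ := hbig j hj
      obtain ⟨h3, h4⟩ := hkeychar j
      constructor
      · have : q' * L * N1 < (key j + 1) * N1 := by
          calc q' * (L:ℤ) * N1 = q' * ((L:ℤ) * N1) := by ring
          _ ≤ j * (Nr:ℤ) := h1
          _ < (key j + 1) * N1 := h4
        have := lt_of_mul_lt_mul_right this (le_of_lt hN1Z)
        omega
      · have : key j * N1 < (q' * L + L) * N1 := by
          calc key j * (N1:ℤ) ≤ j * (Nr:ℤ) := h3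
          _ < (q' + 1) * ((L:ℤ) * N1) := h2
          _ = (q' * L + L) * N1 := by ring
        have := lt_of_mul_lt_mul_right this (le_of_lt hN1Z)
        omega
    -- fibers
    set c : ℤ → ℕ := fun j => (key j - q' * L).toNat with hcdef
    set Ji : ℕ → Finset ℤ := fun i => J'.filter (fun j => c j = i) with hJidef
    have hfib : ∀ j ∈ J', c j ∈ Finset.range L := by
      intro j hj
      obtain ⟨h1, h2⟩ := hkeyrange j hj
      rw [Finset.mem_range]
      simp only [hcdef]
      omega
    have hsum : J'.card = ∑ i ∈ Finset.range L, (Ji i).card :=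
      Finset.card_eq_sum_card_fiberwise hfib
    have hkeyJi : ∀ i : ℕ, ∀ j ∈ Ji i, key j = q' * L + i := by
      intro i j hj
      rw [hJidef, Finset.mem_filter] at hj
      obtain ⟨h1, h2⟩ := hkeyrange j hj.1
      have := hj.2
      simp only [hcdef] at this
      omega
    -- cells of a fiber lie in the corresponding subcell
    have hsub : ∀ i : ℕ, ∀ j ∈ Ji i, cellD r j ⊆ cellD (r + k) (q' * L + i) := by
      intro i j hj
      have hk := hkeyJi i j hj
      obtain ⟨h3, h4⟩ := hkeychar j
      rw [hk] at h3 h4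
      unfold cellD
      apply Set.Ico_subset_Ico
      · rw [← hN1def, ← hNrdef]
        exact h3
      · rw [← hN1def, ← hNrdef]
        -- (j+1)*Nr ≤ (q'L+i+1)*N1
        have hmZ : (N1:ℤ) = (Nr:ℤ) * m := by exact_mod_cast hmN
        have hNrZ : (0:ℤ) < (Nr:ℤ) := by exact_mod_cast hNr0
        have hj' : j * (Nr:ℤ) < ((q' * L + i + 1) * m) * Nr := by
          calc j * (Nr:ℤ) < (q' * L + i + 1) * N1 := h4
          _ = ((q' * L + i + 1) * m) * Nr := by rw [hmZ]; ring
        have : j < (q' * L + i + 1) * m := lt_of_mul_lt_mul_right hj' hNrZ.le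
        calc (j + 1) * (Nr:ℤ) ≤ ((q' * L + i + 1) * m) * Nr := by
              apply mul_le_mul_of_nonneg_right _ hNrZ.le
              omega
        _ = (q' * L + i + 1) * N1 := by rw [hmZ]; ring
    -- capacity bound
    have hcap : ∀ i : ℕ, (Ji i).card ≤ m := by
      intro i
      have hss : Ji i ⊆ Finset.Ico ((q' * L + i) * m) ((q' * L + i + 1) * m) := by
        intro j hj
        have hk := hkeyJi i j hj
        obtain ⟨h3, h4⟩ := hkeychar j
        rw [hk] at h3 h4
        have hmZ : (N1:ℤ) = (Nr:ℤ) * m := by exact_mod_cast hmN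
        have hNrZ : (0:ℤ) < (Nr:ℤ) := by exact_mod_cast hNr0
        rw [Finset.mem_Ico]
        constructor
        · have : ((q' * L + i) * m) * (Nr:ℤ) ≤ j * Nr := by
            calc ((q' * L + i) * m) * (Nr:ℤ) = (q' * L + i) * N1 := by rw [hmZ]; ring
            _ ≤ j * Nr := h3
          exact le_of_mul_le_mul_right this hNrZ
        · have : j * (Nr:ℤ) < ((q' * L + i + 1) * m) * Nr := by
            calc j * (Nr:ℤ) < (q' * L + i + 1) * N1 := h4
            _ = ((q' * L + i + 1) * m) * Nr := by rw [hmZ]; ring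
          exact lt_of_mul_lt_mul_right this hNrZ.le
      calc (Ji i).card ≤ _ := Finset.card_le_card hss
      _ = m := by
        rw [Int.card_Ico]
        have : ((q' * L + i + 1) * m - (q' * L + i) * m : ℤ) = (m:ℤ) := by ring
        rw [this, Int.toNat_natCast]
    -- the good set
    classical
    set G : Finset ℕ := (Finset.range L).filter
      (fun i => (1 - kappaSeq r (r + k)) * (m:ℝ) < ((Ji i).card : ℝ)) with hGdef
    have hGsub : G ⊆ Finset.range L := Finset.filter_subset _ _
    have hkap1 : kappaSeq r (r + k) ≤ 1 := kappa_le_one hr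
    have hkap0 : 0 < kappaSeq r (r + k) := kappa_pos hr
    have hm0R : (0:ℝ) < (m:ℝ) := by exact_mod_cast hm0
    have hG : alphaSeq (r + k + 1) * ((L:ℕ):ℝ) ≤ (G.card : ℝ) := by
      have hks : kappaSeq r (r + (k+1)) = kappaSeq r (r + k) * (1 - alphaSeq (r + k + 1)) :=
        kappa_succ (Nat.le_add_right r k)
      have hNdiv : ((Nseq (r + (k+1)) : ℕ) : ℝ) / ((Nr:ℕ) : ℝ) = ((L:ℕ):ℝ) * ((m:ℕ):ℝ) := by
        rw [hN, hmN]
        push_cast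
        have hne : ((Nr:ℕ):ℝ) ≠ 0 := Nat.cast_ne_zero.mpr hNr0.ne'
        field_simp
      rw [hks] at hcard
      rw [hNdiv] at hcard
      have hsplit := Finset.sum_filter_add_sum_filter_not (Finset.range L)
        (fun i => (1 - kappaSeq r (r + k)) * (m:ℝ) < ((Ji i).card : ℝ))
        (fun i => ((Ji i).card : ℝ))
      have hsumR : (J'.card : ℝ) = ∑ i ∈ Finset.range L, ((Ji i).card : ℝ) := by
        rw [hsum]; push_cast; ring
      set Gc := (Finset.range L).filter
        (fun i => ¬ ((1 - kappaSeq r (r + k)) * (m:ℝ) < ((Ji i).card : ℝ))) with hGcdef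
    -- cardinalities add up
      have hcards : G.card + Gc.card = L := by
        rw [hGdef, hGcdef, Finset.card_filter_add_card_filter_not, Finset.card_range]
      have hb1 : ∑ i ∈ G, ((Ji i).card : ℝ) ≤ (G.card : ℝ) * (m:ℝ) := by
        calc ∑ i ∈ G, ((Ji i).card : ℝ) ≤ ∑ _i ∈ G, (m:ℝ) :=
              Finset.sum_le_sum (fun i _ => by exact_mod_cast hcap i)
        _ = (G.card : ℝ) * m := by rw [Finset.sum_const, nsmul_eq_mul]
      have hb2 : ∑ i ∈ Gc, ((Ji i).card : ℝ)
          ≤ (Gc.card : ℝ) * ((1 - kappaSeq r (r + k)) * m) := by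
        calc ∑ i ∈ Gc, ((Ji i).card : ℝ)
            ≤ ∑ _i ∈ Gc, ((1 - kappaSeq r (r+k)) * (m:ℝ)) := by
              apply Finset.sum_le_sum
              intro i hi
              rw [hGcdef, Finset.mem_filter] at hi
              exact le_of_not_gt hi.2
        _ = _ := by rw [Finset.sum_const, nsmul_eq_mul]
      have hineq : (1 - kappaSeq r (r+k) * (1 - alphaSeq (r+k+1))) * (((L:ℕ):ℝ) * (m:ℝ))
          ≤ (G.card:ℝ) * (m:ℝ) + (Gc.card:ℝ) * ((1 - kappaSeq r (r+k)) * (m:ℝ)) := by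
        calc (1 - kappaSeq r (r+k) * (1 - alphaSeq (r+k+1))) * (((L:ℕ):ℝ) * (m:ℝ))
            = (1 - kappaSeq r (r+k) * (1 - alphaSeq (r+k+1))) * (((L:ℕ):ℝ) * (m:ℝ)) := rfl
        _ ≤ (J'.card : ℝ) := hcard
        _ = ∑ i ∈ G, ((Ji i).card : ℝ) + ∑ i ∈ Gc, ((Ji i).card : ℝ) := by
              rw [hsumR, ← hsplit]
        _ ≤ _ := add_le_add hb1 hb2
      have hGcR : (Gc.card : ℝ) = ((L:ℕ):ℝ) - (G.card:ℝ) := by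
        have h9 : (G.card:ℝ) + (Gc.card:ℝ) = ((L:ℕ):ℝ) := by exact_mod_cast hcards
        linarith
      rw [hGcR] at hineq
      have h5 : (alphaSeq (r+k+1) * ((L:ℕ):ℝ)) * (kappaSeq r (r+k) * (m:ℝ))
          ≤ (G.card:ℝ) * (kappaSeq r (r+k) * (m:ℝ)) := by linarith only [hineq]
      exact le_of_mul_le_mul_right h5 (mul_pos hkap0 hm0R)
    -- meandering at the top scale
    obtain ⟨j₀, hj₀⟩ := hne
    have hcastN : ((Nseq (r + (k+1)) : ℕ) : ℤ) = (L:ℤ) * (N1:ℤ) := by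
      rw [hN]; push_cast; ring
    have hq : ∀ j ∈ J', Int.fdiv (j * (Nr:ℤ)) ((Nseq (r + (k+1)) : ℕ) : ℤ) = q' := by
      intro j hj
      rw [fdiv_eq_iff hNZ, hcastN]
      exact hbig j hj
    have hstart : cellStart (r + k + 1) (j₀ * (Nr:ℤ)) = q' * ((L:ℤ) * (N1:ℤ)) := by
      unfold cellStart
      have h1 : Int.fdiv (j₀ * (Nr:ℤ)) ((Nseq (r + k + 1) : ℕ) : ℤ) = q' := hq j₀ hj₀
      rw [h1]
      exact congrArg (fun z => q' * z) hcastN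
    have hmnd := hm j₀ hj₀ _ (hleft j₀) (r + k + 1) (by omega) (by omega)
    rw [hstart] at hmnd
    have hM : Nseq (r + k + 1 - 1) = N1 := by rw [Nat.add_sub_cancel, hN1def]
    rw [hM, ← hLdef] at hmnd
    obtain ⟨i, hiG, i', hi'G, hii', hsep⟩ := hmnd G hGsub hG
    -- identify the meandering blocks with cells of the partition one level down
    have hIco : ∀ i : ℕ,
        Set.Ico (q' * ((L:ℤ) * (N1:ℤ)) + (i:ℤ) * ((N1:ℕ):ℤ))
          (q' * ((L:ℤ) * (N1:ℤ)) + ((i:ℤ) + 1) * ((N1:ℕ):ℤ))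
          = cellD (r + k) (q' * (L:ℤ) + (i:ℕ)) := by
      intro i
      unfold cellD
      rw [← hN1def]
      congr 1 <;> ring
    rw [hIco i, hIco i'] at hsep
    -- apply the induction hypothesis in each branch
    have hbranch : ∀ b : ℕ, b ∈ G → ∃ f : (Fin k → Bool) → ℤ,
        (∀ ω, f ω ∈ Ji b) ∧
        (∀ s : ℕ, s ≤ k → ∀ ω ω' : Fin k → Bool,
          (∀ i : Fin k, (i : ℕ) < s → ω i = ω' i) →
          Int.fdiv (f ω * (Nr:ℤ)) (Nseq (r + k - s))
            = Int.fdiv (f ω' * (Nr:ℤ)) (Nseq (r + k - s))) ∧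
        (∀ ω ω' : Fin k → Bool, ∀ i : Fin k, ω i ≠ ω' i →
          Int.fdiv (f ω * (Nr:ℤ)) (Nseq (r + k - ((i : ℕ) + 1)))
            ≠ Int.fdiv (f ω' * (Nr:ℤ)) (Nseq (r + k - ((i : ℕ) + 1)))) ∧
        (∀ ω ω' : Fin k → Bool, ω ≠ ω' →
          Disjoint (realNbhd ℓ (zimg S σ y (cellD r (f ω))))
            (realNbhd ℓ (zimg S σ y (cellD r (f ω'))))) := by
      intro b hbG
      rw [hGdef, Finset.mem_filter] at hbG
      have hlt := hbG.2
      have h0 : (0:ℝ) ≤ (1 - kappaSeq r (r + k)) * (m:ℝ) :=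
        mul_nonneg (by linarith) hm0R.le
      have hposcard : (0:ℝ) < ((Ji b).card : ℝ) := lt_of_le_of_lt h0 hlt
      have hneb : (Ji b).Nonempty := by
        rw [← Finset.card_pos]
        exact_mod_cast hposcard
      have hdiv : ((N1:ℕ):ℝ) / ((Nr:ℕ):ℝ) = (m:ℝ) := by
        rw [hmN]
        push_cast
        have hne2 : ((Nr:ℕ):ℝ) ≠ 0 := Nat.cast_ne_zero.mpr hNr0.ne'
        field_simp
      have hcardb : (1 - kappaSeq r (r + k)) * (((N1:ℕ):ℝ) / ((Nr:ℕ):ℝ)) ≤ ((Ji b).card : ℝ) := by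
        rw [hdiv]
        exact hlt.le
      exact ih (q' * (L:ℤ) + (b:ℕ)) (Ji b) (hsub b) hneb hcardb
        (fun j hj t ht s h1 h2 => hm j (Finset.mem_of_mem_filter j hj) t ht s h1 (by omega))
    obtain ⟨f₀, hf₀J, hf₀pre, hf₀diff, hf₀dis⟩ := hbranch i hiG
    obtain ⟨f₁, hf₁J, hf₁pre, hf₁diff, hf₁dis⟩ := hbranch i' hi'G
    set F : (Fin (k+1) → Bool) → ℤ :=
      fun ω => if ω 0 then f₁ (fun j => ω j.succ) else f₀ (fun j => ω j.succ) with hFdef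
    have hFfalse : ∀ ω : Fin (k+1) → Bool, ω 0 = false → F ω = f₀ (fun j => ω j.succ) := by
      intro ω h
      rw [hFdef]
      simp [h]
    have hFtrue : ∀ ω : Fin (k+1) → Bool, ω 0 = true → F ω = f₁ (fun j => ω j.succ) := by
      intro ω h
      rw [hFdef]
      simp [h]
    have hFJi : ∀ ω : Fin (k+1) → Bool,
        F ω ∈ Ji (if ω 0 then i' else i) := by
      intro ω
      cases h : ω 0
      · rw [hFfalse ω h]
        simp only [Bool.false_eq_true, if_neg]
        exact hf₀J _
      · rw [hFtrue ω h]
        simp only [if_pos]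
        exact hf₁J _
    have hFJ : ∀ ω : Fin (k+1) → Bool, F ω ∈ J' := by
      intro ω
      exact Finset.mem_of_mem_filter _ (hFJi ω)
    have hkeyJi' : ∀ b : ℕ, ∀ j ∈ Ji b,
        Int.fdiv (j * (Nr:ℤ)) ((N1:ℕ):ℤ) = q' * (L:ℤ) + (b:ℤ) := by
      intro b j hj
      have := hkeyJi b j hj
      rw [hkeydef] at this
      exact this
    have hFkey : ∀ ω : Fin (k+1) → Bool,
        Int.fdiv (F ω * (Nr:ℤ)) ((N1:ℕ):ℤ)
          = q' * (L:ℤ) + (if ω 0 then (i':ℤ) else (i:ℤ)) := by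
      intro ω
      have h1 := hkeyJi' _ _ (hFJi ω)
      cases h : ω 0
      · rw [h] at h1
        simp only [Bool.false_eq_true, if_neg] at h1 ⊢
        exact h1
      · rw [h] at h1
        simp only [if_pos] at h1 ⊢
        exact h1
    refine ⟨F, hFJ, ?_, ?_, ?_⟩
    · -- prefix condition
      intro s hs ω ω' hagree
      rcases Nat.eq_zero_or_pos s with rfl | hspos
      · have he : r + (k+1) - 0 = r + (k+1) := by omega
        rw [he, hq _ (hFJ ω), hq _ (hFJ ω')]
      · obtain ⟨s', rfl⟩ : ∃ s', s = s' + 1 := ⟨s - 1, by omega⟩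
        have he : r + (k+1) - (s'+1) = r + k - s' := by omega
        rw [he]
        have h0 : ω 0 = ω' 0 := hagree 0 (by simp)
        have hagree' : ∀ j : Fin k, (j : ℕ) < s' → ω j.succ = ω' j.succ := by
          intro j hj
          exact hagree j.succ (by simp; omega)
        cases h : ω 0
        · rw [hFfalse ω h, hFfalse ω' (h0 ▸ h)]
          exact hf₀pre s' (by omega) _ _ hagree'
        · rw [hFtrue ω h, hFtrue ω' (h0 ▸ h)]
          exact hf₁pre s' (by omega) _ _ hagree'
    · -- separation condition
      intro ω ω' i₀ hne₀
      by_cases hv : (i₀ : ℕ) = 0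
      · have hi₀ : i₀ = 0 := Fin.ext hv
        rw [hi₀] at hne₀
        have he : r + (k+1) - ((i₀:ℕ) + 1) = r + k := by omega
        rw [he, ← hN1def]
        rw [hFkey ω, hFkey ω']
        have hiine : (i:ℤ) ≠ (i':ℤ) := by exact_mod_cast hii'
        have hiine2 : (i':ℤ) ≠ (i:ℤ) := Ne.symm hiine
        cases h : ω 0 <;> cases h' : ω' 0
        · exact absurd (h.trans h'.symm) hne₀
        · norm_num
          exact hii'
        · norm_num
          exact Ne.symm hii'
        · exact absurd (h.trans h'.symm) hne₀
      · obtain ⟨v, hv'⟩ : ∃ v, (i₀ : ℕ) = v + 1 := ⟨(i₀:ℕ) - 1, by omega⟩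
        have hvk : v < k := by
          have := i₀.isLt
          omega
        by_cases h0 : ω 0 = ω' 0
        · have he : r + (k+1) - ((i₀:ℕ) + 1) = r + k - (((⟨v, hvk⟩ : Fin k) : ℕ) + 1) := by
            simp only [Fin.val_mk]
            omega
          rw [he]
          have hisucc : (⟨v, hvk⟩ : Fin k).succ = i₀ := by
            apply Fin.ext
            simp [Fin.val_succ, hv']
          have hne₁ : ω ((⟨v, hvk⟩ : Fin k).succ) ≠ ω' ((⟨v, hvk⟩ : Fin k).succ) := by
            rw [hisucc]; exact hne₀
          cases h : ω 0
          · rw [hFfalse ω h, hFfalse ω' (h0 ▸ h)]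
            exact hf₀diff _ _ ⟨v, hvk⟩ hne₁
          · rw [hFtrue ω h, hFtrue ω' (h0 ▸ h)]
            exact hf₁diff _ _ ⟨v, hvk⟩ hne₁
        · -- different branches : already different at the coarser scale
          have hd1 : Int.fdiv (F ω * (Nr:ℤ)) ((N1:ℕ):ℤ)
              ≠ Int.fdiv (F ω' * (Nr:ℤ)) ((N1:ℕ):ℤ) := by
            rw [hFkey ω, hFkey ω']
            have hiine : (i:ℤ) ≠ (i':ℤ) := by exact_mod_cast hii'
            have hiine2 : (i':ℤ) ≠ (i:ℤ) := Ne.symm hiine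
            cases h : ω 0 <;> cases h' : ω' 0
            · exact absurd (h.trans h'.symm) h0
            · norm_num
              exact hii'
            · norm_num
              exact Ne.symm hii'
            · exact absurd (h.trans h'.symm) h0
          intro heq
          apply hd1
          refine fdiv_eq_of_dvd ?_ ?_ hN1Z heq
          · exact_mod_cast Nseq_pos (r + (k+1) - ((i₀:ℕ) + 1))
          · have hdvd : Nseq (r + (k+1) - ((i₀:ℕ) + 1)) ∣ N1 := by
              rw [hN1def]
              exact Nseq_dvd (by omega)
            exact_mod_cast hdvd
    · -- disjointness
      intro ω ω' hne'
      by_cases h0 : ω 0 = ω' 0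
      · have htail : (fun j : Fin k => ω j.succ) ≠ (fun j : Fin k => ω' j.succ) := by
          intro hteq
          apply hne'
          funext j
          refine Fin.cases ?_ ?_ j
          · exact h0
          · intro jj
            exact congrFun hteq jj
        cases h : ω 0
        · rw [hFfalse ω h, hFfalse ω' (h0 ▸ h)]
          exact hf₀dis _ _ htail
        · rw [hFtrue ω h, hFtrue ω' (h0 ▸ h)]
          exact hf₁dis _ _ htail
      · cases h : ω 0
        · have h' : ω' 0 = true := by
            cases h'' : ω' 0
            · rw [h, h''] at h0; exact absurd rfl h0
            · rfl
          have hm₀ : F ω ∈ Ji i := by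
            have := hFJi ω
            rw [h] at this
            simpa using this
          have hm₁ : F ω' ∈ Ji i' := by
            have := hFJi ω'
            rw [h'] at this
            simpa using this
          exact disjoint_nbhd (Set.image_mono (hsub i _ hm₀))
            (Set.image_mono (hsub i' _ hm₁)) hsep
        · have h' : ω' 0 = false := by
            cases h'' : ω' 0
            · rfl
            · rw [h, h''] at h0; exact absurd rfl h0
          have hm₀ : F ω ∈ Ji i' := by
            have := hFJi ω
            rw [h] at this
            simpa using this
          have hm₁ : F ω' ∈ Ji i := by
            have := hFJi ω'
            rw [h'] at this
            simpa using this
          exact (disjoint_nbhd (Set.image_mono (hsub i _ hm₁))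
            (Set.image_mono (hsub i' _ hm₀)) hsep).symm


/-- **Finding a good discrete Cantor family for a good trajectory.**
If at least `(1 − κ_{r,d})·N_d/N_r` of the `𝒟_r`-cells of a `𝒟_d`-cell `Q` lie in the
meandering sets `H^{mndr}_{s,Q}(y)` for all `r < s ≤ d`, then inside this family of
cells there is a discrete Cantor family adapted to `(𝒟_d, …, 𝒟_r)` whose
`ℓ`-neighbourhoods of cocycle-images are pairwise disjoint. -/
theorem good_discrete_cantor_family
    {Y : Type*} (S : Equiv.Perm Y) (σ : Y → ℝ) (ℓ : ℝ) (hℓ : 0 < ℓ)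
    (r d : ℕ) (hr : 1 ≤ r) (hrd : r < d) (q : ℤ) (y : Y)
    (J : Finset ℤ)
    (hJQ : ∀ j ∈ J, cellD r j ⊆ cellD d q)
    (hJcard : (1 - kappaSeq r d) * ((Nseq d : ℝ) / (Nseq r : ℝ)) ≤ (J.card : ℝ))
    (hmndr : ∀ j ∈ J, ∀ t ∈ cellD r j, ∀ s : ℕ, r + 1 ≤ s → s ≤ d →
      MeandZ S σ y (alphaSeq s) ℓ (cellStart s t) (Nseq (s - 1)) (Lseq s)) :
    ∃ f : (Fin (d - r) → Bool) → ℤ,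
      (∀ ω, f ω ∈ J) ∧
      (∀ s : ℕ, s ≤ d - r → ∀ ω ω' : Fin (d - r) → Bool,
        (∀ i : Fin (d - r), (i : ℕ) < s → ω i = ω' i) →
        Int.fdiv (f ω * (Nseq r : ℤ)) (Nseq (d - s))
          = Int.fdiv (f ω' * (Nseq r : ℤ)) (Nseq (d - s))) ∧
      (∀ ω ω' : Fin (d - r) → Bool, ∀ i : Fin (d - r), ω i ≠ ω' i →
        Int.fdiv (f ω * (Nseq r : ℤ)) (Nseq (d - ((i : ℕ) + 1)))
          ≠ Int.fdiv (f ω' * (Nseq r : ℤ)) (Nseq (d - ((i : ℕ) + 1)))) ∧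
      (∀ ω ω' : Fin (d - r) → Bool, ω ≠ ω' →
        Disjoint (realNbhd ℓ (zimg S σ y (cellD r (f ω))))
          (realNbhd ℓ (zimg S σ y (cellD r (f ω'))))) := by
  have hd : r + (d - r) = d := Nat.add_sub_cancel' hrd.le
  have hk1 : kappaSeq r d < 1 := kappa_lt_one hr hrd
  have hpos : (0:ℝ) < (1 - kappaSeq r d) * ((Nseq d : ℝ) / (Nseq r : ℝ)) := by
    apply mul_pos (by linarith)
    apply div_pos
    · exact_mod_cast Nseq_pos d
    · exact_mod_cast Nseq_pos r
  have hne : J.Nonempty := by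
    rw [← Finset.card_pos]
    have h2 : (0:ℝ) < (J.card : ℝ) := lt_of_lt_of_le hpos hJcard
    exact_mod_cast h2
  obtain ⟨f, h1, h2, h3, h4⟩ := cantor_aux S σ ℓ hℓ r hr y (d - r) q J
    (by rw [hd]; exact hJQ) hne (by rw [hd]; exact hJcard)
    (fun j hj t ht s hs1 hs2 => hmndr j hj t ht s hs1 (by omega))
  refine ⟨f, h1, ?_, ?_, h4⟩
  · intro s hs ω ω' hag
    have h5 := h2 s hs ω ω' hag
    rwa [show r + (d - r) - s = d - s by omega] at h5
  · intro ω ω' i hne2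
    have h5 := h3 ω ω' i hne2
    rwa [show r + (d - r) - ((i : ℕ) + 1) = d - ((i : ℕ) + 1) by omega] at h5
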